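/- arXiv:2512.07717 — 7 statements merged into one kernel-verified Lean document; each statement's English description precedes it below -/
import Mathlib

section
/- Let $g:[a,b]\to\mathbb{R}$ be left-continuous of bounded variation, $\mu_g$ its associated signed Borel measure with $\mu_g([a,t)) = g(t)-g(a)$, and $h\in L^1(|\mu_g|)$ on $[a,b)$. Then the set $T_h^- = \{t \in D_g : 1 + h(t)\,\Delta^+g(t) \le 0\}$ is finite, where $D_g = \{t\in[a,b) : \Delta^+ g(t)\neq 0\}$ and $\Delta^+g(t) = g(t^+)-g(t)$. -/
open Set Filter MeasureTheory
open scoped ENNReal NNReal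

lemma abs_apply_le_totalVariation (μ : MeasureTheory.SignedMeasure ℝ) {i : Set ℝ}
    (hi : MeasurableSet i) : |μ i| ≤ (μ.totalVariation i).toReal := by
  conv_lhs => rw [← μ.toSignedMeasure_toJordanDecomposition]
  rw [MeasureTheory.JordanDecomposition.toSignedMeasure,
    MeasureTheory.Measure.toSignedMeasure_sub_apply hi,
    MeasureTheory.SignedMeasure.totalVariation, MeasureTheory.Measure.add_apply,
    ENNReal.toReal_add (measure_ne_top _ _) (measure_ne_top _ _)]
  have h1 : (0:ℝ) ≤ (μ.toJordanDecomposition.posPart i).toReal := ENNReal.toReal_nonneg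
  have h2 : (0:ℝ) ≤ (μ.toJordanDecomposition.negPart i).toReal := ENNReal.toReal_nonneg
  simp only [measureReal_def]
  exact abs_le.2 ⟨by linarith, by linarith⟩

/-- For `h ∈ L¹(|μ_g|)`, the set `T_h⁻ = {t ∈ D_g : 1 + h(t) Δ⁺g(t) ≤ 0}` is finite. -/
theorem Th_neg_finite (a b : ℝ) (hab : a < b) (g : ℝ → ℝ)
    (hbv : BoundedVariationOn g (Icc a b))
    (hlc : ∀ t ∈ Ioc a b, Tendsto g (nhdsWithin t (Iio t)) (nhds (g t)))
    (μ : MeasureTheory.SignedMeasure ℝ)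
    (hμ : ∀ t ∈ Icc a b, μ (Ico a t) = g t - g a)
    (h : ℝ → ℝ)
    (hh : IntegrableOn h (Ico a b) μ.totalVariation) :
    {t ∈ Ico a b | Function.rightLim g t ≠ g t ∧
        1 + h t * (Function.rightLim g t - g t) ≤ 0}.Finite := by
  set ν := μ.totalVariation with hνdef
  have hfinν : IsFiniteMeasure ν := by
    rw [hνdef, MeasureTheory.SignedMeasure.totalVariation]; infer_instance
  set ρ : Measure ℝ := ν.withDensity (fun x => (‖h x‖₊ : ℝ≥0∞)) with hρdef
  obtain ⟨p, q, hp, hq, hpq⟩ :=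
    hbv.locallyBoundedVariationOn.exists_monotoneOn_sub_monotoneOn
  set S := {t ∈ Ico a b | Function.rightLim g t ≠ g t ∧
      1 + h t * (Function.rightLim g t - g t) ≤ 0} with hSdef
  -- the total mass of ρ on [a, b) is finite
  have hρfin : ρ (Ico a b) < ⊤ := by
    rw [hρdef, withDensity_apply _ measurableSet_Ico]
    exact hh.2
  -- key pointwise fact
  have key : ∀ t ∈ S, (1 : ℝ≥0∞) ≤ ρ {t} := by
    rintro t ⟨⟨hat, htb⟩, hne, hle⟩
    have htmem : t ∈ Icc a b := ⟨hat, htb.le⟩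
    have hIoo : (Ioo t b).Nonempty := nonempty_Ioo.2 htb
    have hsub : Ioo t b ⊆ Icc a b := fun x hx => ⟨hat.trans hx.1.le, hx.2.le⟩
    -- right limit of g at t exists
    have hbddp : BddBelow (p '' Ioo t b) := by
      refine ⟨p t, ?_⟩
      rintro _ ⟨x, hx, rfl⟩
      exact hp htmem (hsub hx) hx.1.le
    have hbddq : BddBelow (q '' Ioo t b) := by
      refine ⟨q t, ?_⟩
      rintro _ ⟨x, hx, rfl⟩
      exact hq htmem (hsub hx) hx.1.le
    have htp := MonotoneOn.tendsto_nhdsWithin_Ioo_right hIoo (hp.mono hsub) hbddp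
    have htq := MonotoneOn.tendsto_nhdsWithin_Ioo_right hIoo (hq.mono hsub) hbddq
    have hgt : Tendsto g (nhdsWithin t (Ioi t))
        (nhds (sInf (p '' Ioo t b) - sInf (q '' Ioo t b))) := by
      rw [hpq]; exact htp.sub htq
    have hrl : Tendsto g (nhdsWithin t (Ioi t)) (nhds (Function.rightLim g t)) := by
      rw [rightLim_eq_of_tendsto hgt]
      exact hgt
    -- the approximating sequence
    set u : ℕ → ℝ := fun n => t + (b - t) / (n + 1) with hudef
    have hbt : (0:ℝ) < b - t := sub_pos.2 htb
    have hu_mem : ∀ n : ℕ, u n ∈ Ioc t b := by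
      intro n
      have hn1 : (0:ℝ) < (n:ℝ) + 1 := by positivity
      constructor
      · have : (0:ℝ) < (b - t) / (n + 1) := by positivity
        simp only [hudef]; linarith
      · have : (b - t) / ((n:ℝ) + 1) ≤ b - t := by
          apply div_le_self hbt.le; linarith
        simp only [hudef]; linarith
    have hu_anti : Antitone u := by
      intro n m hnm
      have hn1 : (0:ℝ) < (n:ℝ) + 1 := by positivity
      have hc : ((n:ℝ) + 1) ≤ ((m:ℝ) + 1) := by
        have := Nat.succ_le_succ hnm
        exact_mod_cast this
      have : (b - t) / ((m:ℝ) + 1) ≤ (b - t) / ((n:ℝ) + 1) := by gcongr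
      simp only [hudef]; linarith
    have hdiv0 : Tendsto (fun n : ℕ => (b - t) / ((n:ℝ) + 1)) atTop (nhds 0) := by
      apply Tendsto.div_atTop tendsto_const_nhds
      exact tendsto_atTop_add_const_right atTop 1 tendsto_natCast_atTop_atTop
    have hu_t : Tendsto u atTop (nhdsWithin t (Ioi t)) := by
      apply tendsto_nhdsWithin_of_tendsto_nhds_of_eventually_within
      · have := tendsto_const_nhds (x := t) (f := atTop (α := ℕ)) |>.add hdiv0
        simpa using this
      · exact Eventually.of_forall fun n => (hu_mem n).1
    have hgl : Tendsto (fun n => g (u n)) atTop (nhds (Function.rightLim g t)) :=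
      hrl.comp hu_t
    -- the measure of the intervals
    have hmeasμ : ∀ n : ℕ, μ (Ico t (u n)) = g (u n) - g t := by
      intro n
      have h1 := hμ (u n) ⟨hat.trans (hu_mem n).1.le, (hu_mem n).2⟩
      have h2 := hμ t htmem
      have hadd : μ (Ico a (u n)) = μ (Ico a t) + μ (Ico t (u n)) := by
        rw [← VectorMeasure.of_union (Set.Ico_disjoint_Ico_same)
          measurableSet_Ico measurableSet_Ico,
          Ico_union_Ico_eq_Ico hat (hu_mem n).1.le]
      rw [h1, h2] at hadd
      linarith
    have habs : ∀ n : ℕ, |g (u n) - g t| ≤ (ν (Ico t (u n))).toReal := by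
      intro n
      rw [← hmeasμ n]
      exact abs_apply_le_totalVariation μ measurableSet_Ico
    have hInter : ⋂ n, Ico t (u n) = {t} := by
      apply Subset.antisymm
      · intro x hx
        simp only [mem_iInter, mem_Ico] at hx
        have hxt : t ≤ x := (hx 0).1
        have hxle : x - t ≤ 0 := by
          apply ge_of_tendsto hdiv0
          refine Eventually.of_forall fun n => ?_
          have := (hx n).2
          simp only [hudef] at this
          linarith
        have : x = t := le_antisymm (by linarith) hxt
        simp [this]
      · intro x hx
        simp only [mem_singleton_iff] at hx
        subst hx
        exact mem_iInter.2 fun n => ⟨le_refl _, (hu_mem n).1⟩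
    have hν_t : Tendsto (fun n => ν (Ico t (u n))) atTop (nhds (ν {t})) := by
      have := tendsto_measure_iInter_atTop (μ := ν)
        (s := fun n => Ico t (u n))
        (fun n => measurableSet_Ico.nullMeasurableSet)
        (fun n m hnm => Ico_subset_Ico_right (hu_anti hnm))
        ⟨0, measure_ne_top ν _⟩
      rwa [hInter] at this
    have hν_tR : Tendsto (fun n => (ν (Ico t (u n))).toReal) atTop
        (nhds ((ν {t}).toReal)) :=
      (ENNReal.tendsto_toReal (measure_ne_top ν _)).comp hν_t
    have hlim : |Function.rightLim g t - g t| ≤ (ν {t}).toReal := by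
      have habs_t : Tendsto (fun n => |g (u n) - g t|) atTop
          (nhds |Function.rightLim g t - g t|) :=
        (hgl.sub tendsto_const_nhds).abs
      exact le_of_tendsto_of_tendsto' habs_t hν_tR habs
    -- arithmetic
    have h1r : (1:ℝ) ≤ |h t| * (ν {t}).toReal := by
      have hge : (1:ℝ) ≤ |h t * (Function.rightLim g t - g t)| :=
        le_abs.2 (Or.inr (by linarith))
      rw [abs_mul] at hge
      calc (1:ℝ) ≤ |h t| * |Function.rightLim g t - g t| := hge
        _ ≤ |h t| * (ν {t}).toReal :=
          mul_le_mul_of_nonneg_left hlim (abs_nonneg _)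
    have h1e : (1 : ℝ≥0∞) ≤ (‖h t‖₊ : ℝ≥0∞) * ν {t} := by
      have : (1 : ℝ≥0∞) = ENNReal.ofReal 1 := by simp
      rw [this]
      calc ENNReal.ofReal 1 ≤ ENNReal.ofReal (|h t| * (ν {t}).toReal) :=
            ENNReal.ofReal_le_ofReal h1r
        _ = ENNReal.ofReal |h t| * ENNReal.ofReal ((ν {t}).toReal) :=
            ENNReal.ofReal_mul (abs_nonneg _)
        _ = (‖h t‖₊ : ℝ≥0∞) * ν {t} := by
            rw [ENNReal.ofReal_toReal (measure_ne_top ν _), ← Real.norm_eq_abs,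
              ofReal_norm, enorm_eq_nnnorm]
    rw [hρdef, withDensity_apply _ (measurableSet_singleton t),
      lintegral_singleton]
    exact h1e
  -- finiteness
  by_contra hinf
  have f := Set.Infinite.natEmbedding _ hinf
  have hfinj : Function.Injective (fun n => (f n : ℝ)) :=
    Subtype.coe_injective.comp f.injective
  have hdisj : Pairwise (Function.onFun Disjoint (fun n => ({(f n : ℝ)} : Set ℝ))) := by
    intro i j hij
    exact disjoint_singleton.2 fun he => hij (hfinj he)
  have hsum : ρ (⋃ n, ({(f n : ℝ)} : Set ℝ)) = ∑' n, ρ {(f n : ℝ)} :=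
    measure_iUnion hdisj fun n => measurableSet_singleton _
  have htop : (⊤ : ℝ≥0∞) ≤ ρ (⋃ n, ({(f n : ℝ)} : Set ℝ)) := by
    rw [hsum]
    calc (⊤ : ℝ≥0∞) = ∑' _ : ℕ, (1 : ℝ≥0∞) :=
          (ENNReal.tsum_const_eq_top_of_ne_zero one_ne_zero).symm
      _ ≤ ∑' n, ρ {(f n : ℝ)} :=
          ENNReal.tsum_le_tsum fun n => key _ (f n).2
  have hsubset : (⋃ n, ({(f n : ℝ)} : Set ℝ)) ⊆ Ico a b := by
    rintro x hx
    simp only [mem_iUnion, mem_singleton_iff] at hx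
    obtain ⟨n, rfl⟩ := hx
    exact (f n).2.1
  exact absurd (htop.trans (measure_mono hsubset)) (not_le.2 hρfin)
end

section
/- Let $g:[a,b]\to\mathbb{R}$ be left-continuous of bounded variation, $h\in L^1(|\mu_g|)$ on $[a,b)$. Then the function $\overline{h}$ defined by $\overline{h}(t) = h(t)$ if $t\notin D_g$, $\overline{h}(t) = \log|1+h(t)\Delta^+g(t)|/\Delta^+g(t)$ if $t\in D_g$ with $1+h(t)\Delta^+g(t)\neq 0$, and $\overline{h}(t)=0$ otherwise, belongs to $L^1(|\mu_g|)$ on $[a,b)$, provided $\{t\in D_g : 1+h(t)\Delta^+g(t) = 0\}$ is empty or one replaces $\overline{h}$ by $0$ from the first such point onward. -/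
open Set Filter MeasureTheory
open scoped Classical

open scoped Topology ENNReal

private lemma tendsto_meas_Ico (ρ : Measure ℝ) [IsFiniteMeasure ρ] (t : ℝ) :
    Tendsto (fun s => (ρ (Ico t s)).toReal) (𝓝[>] t) (𝓝 ((ρ {t}).toReal)) := by
  set f : ℝ → ℝ := fun s => (ρ (Ico t s)).toReal with hf
  have hmono : Monotone f := fun s s' hss' =>
    ENNReal.toReal_mono (measure_ne_top _ _) (measure_mono (Ico_subset_Ico_right hss'))
  have hlb : ∀ s, t < s → (ρ {t}).toReal ≤ f s := fun s hs =>
    ENNReal.toReal_mono (measure_ne_top _ _)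
      (measure_mono (singleton_subset_iff.2 ⟨le_rfl, hs⟩))
  have hinter : ⋂ n : ℕ, Ico t (t + 1/(n+1)) = {t} := by
    ext x
    simp only [mem_iInter, mem_Ico, mem_singleton_iff]
    constructor
    · intro hx
      have hxt : t ≤ x := (hx 0).1
      have hxle : x ≤ t := by
        by_contra hcon
        push_neg at hcon
        obtain ⟨n, hn⟩ := exists_nat_one_div_lt (sub_pos.2 hcon)
        have := (hx n).2
        linarith
      linarith
    · rintro rfl
      exact fun n => ⟨le_rfl, lt_add_of_pos_right _ (by positivity)⟩
  have hseq : Tendsto (fun n : ℕ => f (t + 1/(n+1))) atTop (𝓝 ((ρ {t}).toReal)) := by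
    have hanti : Antitone fun n : ℕ => Ico t (t + 1/(n+1)) := by
      intro n m hnm
      apply Ico_subset_Ico_right
      have h1 : (1:ℝ)/(m+1) ≤ 1/(n+1) := by
        apply one_div_le_one_div_of_le (by positivity)
        exact_mod_cast by omega
      linarith
    have htend := tendsto_measure_iInter_atTop (μ := ρ)
      (fun n : ℕ => measurableSet_Ico.nullMeasurableSet) hanti ⟨0, measure_ne_top _ _⟩
    rw [hinter] at htend
    exact (ENNReal.tendsto_toReal (measure_ne_top _ _)).comp htend
  rw [tendsto_order]
  constructor
  · intro c hc
    filter_upwards [self_mem_nhdsWithin] with s hs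
    exact lt_of_lt_of_le hc (hlb s hs)
  · intro c hc
    obtain ⟨n, hn⟩ := (hseq.eventually_lt_const hc).exists
    filter_upwards [Ioo_mem_nhdsGT_of_mem (show t ∈ Ico t (t + 1/(n+1)) from ⟨le_rfl, lt_add_of_pos_right _ (by positivity)⟩)] with s hs
    exact lt_of_le_of_lt (hmono hs.2.le) hn

private lemma sm_apply (μ : MeasureTheory.SignedMeasure ℝ) {i : Set ℝ} (hi : MeasurableSet i) :
    μ i = (μ.toJordanDecomposition.posPart i).toReal
      - (μ.toJordanDecomposition.negPart i).toReal := by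
  conv_lhs => rw [← μ.toSignedMeasure_toJordanDecomposition]
  rw [MeasureTheory.JordanDecomposition.toSignedMeasure, Measure.toSignedMeasure_sub_apply hi]
  rfl

private lemma singleton_eq (a b : ℝ) (g : ℝ → ℝ) (μ : MeasureTheory.SignedMeasure ℝ)
    (hμ : ∀ t ∈ Icc a b, μ (Ico a t) = g t - g a) {t : ℝ} (ht : t ∈ Ico a b) :
    μ {t} = Function.rightLim g t - g t := by
  have hIoc : ∀ s ∈ Ioc t b, μ (Ico t s) = g s - g t := by
    intro s hs
    have h1 : Ico a t ∪ Ico t s = Ico a s := Ico_union_Ico_eq_Ico ht.1 hs.1.le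
    have h2 : Disjoint (Ico a t) (Ico t s) := Set.Ico_disjoint_Ico_same
    have h3 := μ.of_union h2 measurableSet_Ico measurableSet_Ico
    rw [h1, hμ s ⟨le_trans ht.1 hs.1.le, hs.2⟩, hμ t ⟨ht.1, ht.2.le⟩] at h3
    linarith
  have htend : Tendsto g (𝓝[>] t) (𝓝 (g t + μ {t})) := by
    have hP := tendsto_meas_Ico μ.toJordanDecomposition.posPart t
    have hN := tendsto_meas_Ico μ.toJordanDecomposition.negPart t
    have hc : Tendsto (fun s => g t + ((μ.toJordanDecomposition.posPart (Ico t s)).toReal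
        - (μ.toJordanDecomposition.negPart (Ico t s)).toReal)) (𝓝[>] t)
        (𝓝 (g t + μ {t})) := by
      rw [sm_apply μ (measurableSet_singleton t)]
      exact tendsto_const_nhds.add (hP.sub hN)
    apply hc.congr'
    filter_upwards [Ioo_mem_nhdsGT_of_mem (Set.left_mem_Ico.2 ht.2)] with s hs
    rw [← sm_apply μ measurableSet_Ico, hIoc s ⟨hs.1, hs.2.le⟩]
    ring
  have hrl := rightLim_eq_of_tendsto htend
  rw [hrl]; ring

private lemma tv_singleton (μ : MeasureTheory.SignedMeasure ℝ) (t : ℝ) :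
    μ.totalVariation {t} = ENNReal.ofReal |μ {t}| := by
  obtain ⟨S, hSm, hS1, hS2⟩ := μ.toJordanDecomposition.mutuallySingular
  rw [MeasureTheory.SignedMeasure.totalVariation, Measure.add_apply,
    sm_apply μ (measurableSet_singleton t)]
  by_cases htS : t ∈ S
  · have hP0 : μ.toJordanDecomposition.posPart {t} = 0 :=
      measure_mono_null (singleton_subset_iff.2 htS) hS1
    rw [hP0, zero_add, ENNReal.toReal_zero, zero_sub, abs_neg,
      abs_of_nonneg ENNReal.toReal_nonneg, ENNReal.ofReal_toReal (measure_ne_top _ _)]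
  · have hN0 : μ.toJordanDecomposition.negPart {t} = 0 :=
      measure_mono_null (singleton_subset_iff.2 htS) hS2
    rw [hN0, add_zero, ENNReal.toReal_zero, sub_zero,
      abs_of_nonneg ENNReal.toReal_nonneg, ENNReal.ofReal_toReal (measure_ne_top _ _)]

private lemma abs_log_le (x : ℝ) (hx : |x| ≤ 1/2) : |Real.log (|1 + x|)| ≤ 2 * |x| := by
  obtain ⟨hx1, hx2⟩ := abs_le.1 hx
  have h0 : (0:ℝ) < 1 + x := by linarith
  rw [abs_of_pos h0]
  have hup : Real.log (1 + x) ≤ x := by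
    have := Real.log_le_sub_one_of_pos h0; linarith
  have hlow : x / (1 + x) ≤ Real.log (1 + x) := by
    have h2 := Real.log_le_sub_one_of_pos (x := (1 + x)⁻¹) (by positivity)
    rw [Real.log_inv] at h2
    have h3 : (1 + x)⁻¹ - 1 = -x / (1 + x) := by field_simp; ring
    rw [h3] at h2
    have h4 : -(x / (1 + x)) = -x / (1 + x) := by ring
    linarith [h2, neg_le_neg h2]
  rw [abs_le]
  constructor
  · rcases le_or_gt 0 x with hxx | hxx
    · have := Real.log_nonneg (by linarith : (1:ℝ) ≤ 1 + x)
      have := abs_nonneg x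
      linarith
    · rw [abs_of_neg hxx]
      have hq : 2 * x ≤ x / (1 + x) := by
        rw [le_div_iff₀ h0]
        nlinarith
      linarith
  · have := le_abs_self x
    have := abs_nonneg x
    linarith

/-- If `1 + h(t)Δ⁺g(t) ≠ 0` on `D_g`, then the modified function `h̄`
(equal to `h` off the jump set and to `log|1+hΔ⁺g|/Δ⁺g` on it) is `|μ_g|`-integrable. -/
theorem hbar_integrable (a b : ℝ) (hab : a < b) (g : ℝ → ℝ)
    (hbv : BoundedVariationOn g (Icc a b))
    (hlc : ∀ t ∈ Ioc a b, Tendsto g (nhdsWithin t (Iio t)) (nhds (g t)))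
    (μ : MeasureTheory.SignedMeasure ℝ)
    (hμ : ∀ t ∈ Icc a b, μ (Ico a t) = g t - g a)
    (h : ℝ → ℝ)
    (hh : IntegrableOn h (Ico a b) μ.totalVariation)
    (hne : ∀ t ∈ Ico a b, Function.rightLim g t ≠ g t →
      1 + h t * (Function.rightLim g t - g t) ≠ 0) :
    IntegrableOn
      (fun t => if Function.rightLim g t ≠ g t then
          Real.log |1 + h t * (Function.rightLim g t - g t)| / (Function.rightLim g t - g t)
        else h t)
      (Ico a b) μ.totalVariation := by
  set ν := μ.totalVariation with hν
  haveI : IsFiniteMeasure ν := by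
    rw [hν]; unfold MeasureTheory.SignedMeasure.totalVariation; infer_instance
  set F : ℝ → ℝ := fun t => if Function.rightLim g t ≠ g t then
      Real.log |1 + h t * (Function.rightLim g t - g t)| / (Function.rightLim g t - g t)
    else h t with hFdef
  have htv : ∀ t ∈ Ico a b, ν {t} = ENNReal.ofReal |Function.rightLim g t - g t| := by
    intro t ht
    rw [hν, tv_singleton, singleton_eq a b g μ hμ ht]
  set D : Set ℝ := {t | t ∈ Ico a b ∧ Function.rightLim g t ≠ g t} with hDdef
  have hDsub : D ⊆ Ico a b := fun t ht => ht.1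
  have hDc : D.Countable := by
    have hsub : D ⊆ {t : ℝ | 0 < ν {t}} := by
      intro t ht
      have := htv t ht.1
      simp only [mem_setOf_eq, this, ENNReal.ofReal_pos, abs_pos, sub_ne_zero]
      exact ht.2
    exact (Measure.countable_meas_pos_of_disjoint_iUnion (μ := ν)
      (fun i : ℝ => measurableSet_singleton i)
      (fun i j hij => Set.disjoint_singleton.2 hij)).mono hsub
  have hDm : MeasurableSet D := hDc.measurableSet
  -- Part 1 : off the jump set
  have h1 : IntegrableOn F (Ico a b \ D) ν := by
    refine (hh.mono_set diff_subset).congr_fun ?_ (measurableSet_Ico.diff hDm)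
    intro t ht
    have hnot : ¬ (Function.rightLim g t ≠ g t) := fun hne' => ht.2 ⟨ht.1, hne'⟩
    simp only [hFdef, if_neg hnot]
  -- singleton products
  have hFin : ∀ t ∈ D, ‖F t‖ₑ * ν {t}
      = ENNReal.ofReal |Real.log (|1 + h t * (Function.rightLim g t - g t)|)| := by
    intro t ht
    have hΔ : Function.rightLim g t - g t ≠ 0 := sub_ne_zero.2 ht.2
    have hFt : F t = Real.log (|1 + h t * (Function.rightLim g t - g t)|)
        / (Function.rightLim g t - g t) := if_pos ht.2
    rw [htv t ht.1, Real.enorm_eq_ofReal_abs, ← ENNReal.ofReal_mul (abs_nonneg _), hFt,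
      abs_div, div_mul_cancel₀ _ (abs_ne_zero.2 hΔ)]
  -- summability of the jumps weighted by h
  have hw : Summable (fun t : D => |h t * (Function.rightLim g (t : ℝ) - g t)|) := by
    have hfin := (hh.mono_set hDsub).2
    rw [hasFiniteIntegral_def, lintegral_countable _ hDc] at hfin
    have heq : ∀ t : D, ‖h (t : ℝ)‖ₑ * ν {(t : ℝ)}
        = ENNReal.ofReal (|h t * (Function.rightLim g (t : ℝ) - g t)|) := by
      intro t
      rw [htv t t.2.1, Real.enorm_eq_ofReal_abs, ← ENNReal.ofReal_mul (abs_nonneg _), abs_mul]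
    rw [tsum_congr heq] at hfin
    have := ENNReal.summable_toReal hfin.ne
    refine this.congr fun t => ?_
    rw [ENNReal.toReal_ofReal (abs_nonneg _)]
  -- the bad set is finite
  set Sbad : Set D := {t : D | 1/2 < |h t * (Function.rightLim g (t : ℝ) - g t)|} with hSdef
  have hSfin : Sbad.Finite := by
    have hev := hw.tendsto_cofinite_zero.eventually_lt_const (by norm_num : (0:ℝ) < 1/2)
    refine (Filter.eventually_cofinite.1 hev).subset ?_
    intro t ht
    simp only [mem_setOf_eq, not_lt]
    exact le_of_lt ht
  -- summability of the logs
  set L : D → ℝ := fun t => |Real.log (|1 + h t * (Function.rightLim g (t : ℝ) - g t)|)|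
    with hLdef
  have hL : Summable L := by
    have hLsum : Summable (fun t : D =>
        2 * |h t * (Function.rightLim g (t : ℝ) - g t)| + Sbad.indicator L t) :=
      (hw.mul_left 2).add (summable_of_finite_support
        (hSfin.subset Set.support_indicator_subset))
    refine Summable.of_nonneg_of_le (fun t => abs_nonneg _) ?_ hLsum
    intro t
    by_cases htb : t ∈ Sbad
    · rw [Set.indicator_of_mem htb]
      have h0 : 0 ≤ 2 * |h t * (Function.rightLim g (t : ℝ) - g t)| := by positivity
      linarith
    · rw [Set.indicator_of_notMem htb, add_zero]
      exact abs_log_le _ (not_lt.1 htb)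
  -- Part 2 : on the jump set
  have h2 : IntegrableOn F D ν := by
    constructor
    · have hmeas : Measurable (D.indicator F) := by
        intro s hs
        by_cases h0 : (0:ℝ) ∈ s
        · have hpre : D.indicator F ⁻¹' s = (D ∩ F ⁻¹' s) ∪ Dᶜ := by
            ext x; by_cases hx : x ∈ D <;> simp [Set.indicator_apply, hx, h0]
          rw [hpre]
          exact ((hDc.mono inter_subset_left).measurableSet).union hDm.compl
        · have hpre : D.indicator F ⁻¹' s = D ∩ F ⁻¹' s := by
            ext x; by_cases hx : x ∈ D <;> simp [Set.indicator_apply, hx, h0]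
          rw [hpre]
          exact (hDc.mono inter_subset_left).measurableSet
      refine hmeas.aestronglyMeasurable.congr ?_
      filter_upwards [ae_restrict_mem hDm] with x hx
      exact Set.indicator_of_mem hx F
    · rw [hasFiniteIntegral_def, lintegral_countable _ hDc]
      have hsum : ∑' t : D, ‖F (t : ℝ)‖ₑ * ν {(t : ℝ)}
          = ∑' t : D, ENNReal.ofReal
            (|Real.log (|1 + h t * (Function.rightLim g (t : ℝ) - g t)|)|) :=
        tsum_congr fun t => hFin t t.2
      rw [hsum, ← ENNReal.ofReal_tsum_of_nonneg (fun t => abs_nonneg _) hL]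
      exact ENNReal.ofReal_lt_top
  have h3 := h1.union h2
  rwa [diff_union_self, union_eq_self_of_subset_right hDsub] at h3
end

section
/- Let $g:[a,b]\to\mathbb{R}$ be left-continuous of bounded variation and $h\in L^1(|\mu_g|)$ with $1+h(t)\Delta^+g(t) > 0$ for all $t\in D_g$. Then the $g$-exponential $e_h(t;a) = \prod_{s\in[a,t)\cap D_g}(1+h(s)\Delta^+g(s))\cdot \exp\big(\int_{[a,t)\setminus D_g} h\, d\mu_g\big)$ satisfies $e_h(t;a) = \exp\big(\int_{[a,t)} \overline{h}\, d\mu_g\big)$ for all $t\in[a,b]$, where $\overline{h}(t) = h(t)$ for $t\notin D_g$ and $\overline{h}(t) = \log(1+h(t)\Delta^+g(t))/\Delta^+g(t)$ for $t\in D_g$. In particular $e_h(\cdot;a) > 0$ everywhere. -/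
open Set Filter MeasureTheory
open scoped Classical ENNReal NNReal Topology

/-- Integral of `f` with respect to a signed measure, via the Jordan decomposition. -/
noncomputable def sInt (μ : MeasureTheory.SignedMeasure ℝ) (f : ℝ → ℝ) (s : Set ℝ) : ℝ :=
  (∫ x in s, f x ∂μ.toJordanDecomposition.posPart) -
    ∫ x in s, f x ∂μ.toJordanDecomposition.negPart

/-- The right jump of `g` at `t`. -/
noncomputable def jump (g : ℝ → ℝ) (t : ℝ) : ℝ := Function.rightLim g t - g t

/-- The jump set `D_g` of `g` on `[a,b)`. -/
def jumpSet (g : ℝ → ℝ) (a b : ℝ) : Set ℝ := {t | t ∈ Set.Ico a b ∧ jump g t ≠ 0}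

/-- The modified integrand `h̄`. -/
noncomputable def hbar (g h : ℝ → ℝ) (t : ℝ) : ℝ :=
  if jump g t ≠ 0 then Real.log (1 + h t * jump g t) / jump g t else h t

lemma abs_log_one_add_le {x : ℝ} (hx : |x| ≤ 1/2) : |Real.log (1+x)| ≤ 2 * |x| := by
  obtain ⟨hx1, hx2⟩ := abs_le.1 hx
  have h0 : (0:ℝ) < 1 + x := by linarith
  rw [abs_le]
  constructor
  · have h1 : Real.log (1+x)⁻¹ ≤ (1+x)⁻¹ - 1 := Real.log_le_sub_one_of_pos (inv_pos.2 h0)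
    rw [Real.log_inv] at h1
    have h2 : 1 - (1+x)⁻¹ ≤ Real.log (1+x) := by linarith
    have h3 : 1 - (1+x)⁻¹ = x / (1+x) := by field_simp; ring
    rcases le_or_gt 0 x with hx0 | hx0
    · have := Real.log_nonneg (by linarith : (1:ℝ) ≤ 1 + x)
      have : (0:ℝ) ≤ 2 * |x| := by positivity
      linarith
    · have h4 : 2 * x ≤ x / (1+x) := by
        rw [le_div_iff₀ h0]; nlinarith
      rw [abs_of_neg hx0]; linarith [h3 ▸ h2]
  · have h5 := Real.log_le_sub_one_of_pos h0
    have := abs_nonneg x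
    have := le_abs_self x
    linarith

lemma measurable_indicator_countable {S : Set ℝ} (hS : S.Countable) (f : ℝ → ℝ) :
    Measurable (S.indicator f) := by
  intro B hB
  by_cases h0 : (0:ℝ) ∈ B
  · have hpre : S.indicator f ⁻¹' B = (S ∩ f ⁻¹' B) ∪ Sᶜ := by
      ext x; by_cases hx : x ∈ S <;> simp [Set.indicator, hx, h0]
    rw [hpre]
    exact ((hS.mono inter_subset_left).measurableSet).union hS.measurableSet.compl
  · have hpre : S.indicator f ⁻¹' B = S ∩ f ⁻¹' B := by
      ext x; by_cases hx : x ∈ S <;> simp [Set.indicator, hx, h0]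
    rw [hpre]
    exact (hS.mono inter_subset_left).measurableSet

lemma integrableOn_countable' {S : Set ℝ} (hS : S.Countable) (ν : Measure ℝ)
    [IsFiniteMeasure ν] (f : ℝ → ℝ)
    (hsum : Summable (fun s : S => |f s.1| * (ν {s.1}).toReal)) :
    IntegrableOn f S ν := by
  constructor
  · refine (measurable_indicator_countable hS f).aestronglyMeasurable.congr ?_
    filter_upwards [ae_restrict_mem hS.measurableSet] with x hx
    exact Set.indicator_of_mem hx f
  · rw [HasFiniteIntegral]
    calc (∫⁻ a in S, (‖f a‖₊ : ℝ≥0∞) ∂ν) = ∑' s : S, (‖f s.1‖₊ : ℝ≥0∞) * ν {s.1} :=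
          lintegral_countable _ hS
      _ = ∑' s : S, ENNReal.ofReal (|f s.1| * (ν {s.1}).toReal) := by
          refine tsum_congr fun s => ?_
          rw [ENNReal.ofReal_mul (abs_nonneg _), ENNReal.ofReal_toReal (measure_ne_top _ _)]
          congr 1
          rw [← Real.norm_eq_abs, ofReal_norm_eq_enorm, enorm_eq_nnnorm]
      _ = ENNReal.ofReal (∑' s : S, |f s.1| * (ν {s.1}).toReal) := by
          rw [ENNReal.ofReal_tsum_of_nonneg (fun s => by positivity) hsum]
      _ < ⊤ := ENNReal.ofReal_lt_top

lemma signedMeasure_apply (μ : MeasureTheory.SignedMeasure ℝ) {u : Set ℝ}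
    (hu : MeasurableSet u) :
    μ u = (μ.toJordanDecomposition.posPart u).toReal -
      (μ.toJordanDecomposition.negPart u).toReal := by
  conv_lhs => rw [← μ.toSignedMeasure_toJordanDecomposition]
  rw [JordanDecomposition.toSignedMeasure, VectorMeasure.sub_apply,
    Measure.toSignedMeasure_apply_measurable hu, Measure.toSignedMeasure_apply_measurable hu]
  rfl

lemma jump_eq_of_measure (a b : ℝ) (g : ℝ → ℝ)
    (hbv : BoundedVariationOn g (Icc a b))
    (μ : MeasureTheory.SignedMeasure ℝ)
    (hμ : ∀ t ∈ Icc a b, μ (Ico a t) = g t - g a) :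
    ∀ s ∈ Ico a b, μ {s} = jump g s := by
  rintro s ⟨has, hsb⟩
  obtain ⟨p, q, hp, hq, hpq⟩ := hbv.locallyBoundedVariationOn.exists_monotoneOn_sub_monotoneOn
  have hIoo : (Ioo s b).Nonempty := ⟨(s+b)/2, by constructor <;> linarith⟩
  have hsub : Ioo s b ⊆ Icc a b := fun x hx => ⟨has.trans hx.1.le, hx.2.le⟩
  have hsmem : s ∈ Icc a b := ⟨has, hsb.le⟩
  have hbddp : BddBelow (p '' Ioo s b) := by
    refine ⟨p s, ?_⟩
    rintro y ⟨x, hx, rfl⟩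
    exact hp hsmem (hsub hx) hx.1.le
  have hbddq : BddBelow (q '' Ioo s b) := by
    refine ⟨q s, ?_⟩
    rintro y ⟨x, hx, rfl⟩
    exact hq hsmem (hsub hx) hx.1.le
  have hps := MonotoneOn.tendsto_nhdsWithin_Ioo_right hIoo (hp.mono hsub) hbddp
  have hqs := MonotoneOn.tendsto_nhdsWithin_Ioo_right hIoo (hq.mono hsub) hbddq
  have hgs : Tendsto g (𝓝[>] s) (𝓝 (sInf (p '' Ioo s b) - sInf (q '' Ioo s b))) := by
    refine (hps.sub hqs).congr fun x => ?_
    rw [hpq]; rfl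
  have hrl : Function.rightLim g s = sInf (p '' Ioo s b) - sInf (q '' Ioo s b) :=
    rightLim_eq_of_tendsto hgs
  -- the sequence
  set u : ℕ → ℝ := fun n => s + (b - s) / (n + 2) with hu_def
  have hbs : (0:ℝ) < b - s := by linarith
  have hu_mem : ∀ n : ℕ, u n ∈ Ioc s b := by
    intro n
    have h2 : (0:ℝ) < (n:ℝ) + 2 := by positivity
    constructor
    · simp only [hu_def, lt_add_iff_pos_right]
      positivity
    · simp only [hu_def]
      have : (b - s) / ((n:ℝ) + 2) ≤ (b - s) / 1 := by
        apply div_le_div_of_nonneg_left hbs.le one_pos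
        linarith
      simp at this
      linarith
  have hu_anti : Antitone u := by
    intro n m hnm
    simp only [hu_def]
    have : (b - s) / ((m:ℝ) + 2) ≤ (b - s) / ((n:ℝ) + 2) := by
      apply div_le_div_of_nonneg_left hbs.le (by positivity)
      linarith [(Nat.cast_le.2 hnm : (n:ℝ) ≤ m)]
    linarith
  have hu_tend : Tendsto u atTop (𝓝 s) := by
    have h1 : Tendsto (fun n : ℕ => ((n:ℝ) + 2)⁻¹) atTop (𝓝 0) :=
      tendsto_inv_atTop_zero.comp (tendsto_atTop_add_const_right _ 2 tendsto_natCast_atTop_atTop)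
    have h2 : Tendsto (fun n : ℕ => s + (b - s) * ((n:ℝ) + 2)⁻¹) atTop (𝓝 (s + (b - s) * 0)) :=
      tendsto_const_nhds.add (tendsto_const_nhds.mul h1)
    simpa [hu_def, div_eq_mul_inv] using h2
  have hset_anti : Antitone fun n => Ico s (u n) := fun n m hnm =>
    Ico_subset_Ico_right (hu_anti hnm)
  have hInter : ⋂ n, Ico s (u n) = {s} := by
    apply Subset.antisymm
    · intro x hx
      simp only [mem_iInter] at hx
      have h1 : s ≤ x := (hx 0).1
      have h2 : x ≤ s := ge_of_tendsto' hu_tend fun n => (hx n).2.le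
      simp [le_antisymm h2 h1]
    · intro x hx
      simp only [mem_singleton_iff] at hx
      subst hx
      exact mem_iInter.2 fun n => ⟨le_refl x, (hu_mem n).1⟩
  set P := μ.toJordanDecomposition.posPart
  set N := μ.toJordanDecomposition.negPart
  have hPt : Tendsto (fun n => P (Ico s (u n))) atTop (𝓝 (P {s})) := by
    have := tendsto_measure_iInter_atTop (μ := P)
      (fun n => measurableSet_Ico.nullMeasurableSet) hset_anti ⟨0, measure_ne_top _ _⟩
    rwa [hInter] at this
  have hNt : Tendsto (fun n => N (Ico s (u n))) atTop (𝓝 (N {s})) := by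
    have := tendsto_measure_iInter_atTop (μ := N)
      (fun n => measurableSet_Ico.nullMeasurableSet) hset_anti ⟨0, measure_ne_top _ _⟩
    rwa [hInter] at this
  have hPt' : Tendsto (fun n => (P (Ico s (u n))).toReal) atTop (𝓝 ((P {s}).toReal)) :=
    (ENNReal.tendsto_toReal (measure_ne_top _ _)).comp hPt
  have hNt' : Tendsto (fun n => (N (Ico s (u n))).toReal) atTop (𝓝 ((N {s}).toReal)) :=
    (ENNReal.tendsto_toReal (measure_ne_top _ _)).comp hNt
  have hμIco : ∀ n, μ (Ico s (u n)) = g (u n) - g s := by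
    intro n
    have hd : Disjoint (Ico a s) (Ico s (u n)) := Set.Ico_disjoint_Ico_same
    have h1 : μ (Ico a s ∪ Ico s (u n)) = μ (Ico a s) + μ (Ico s (u n)) :=
      VectorMeasure.of_union hd measurableSet_Ico measurableSet_Ico
    rw [Ico_union_Ico_eq_Ico has (hu_mem n).1.le] at h1
    have h2 := hμ s hsmem
    have h3 := hμ (u n) ⟨has.trans (hu_mem n).1.le, (hu_mem n).2⟩
    linarith
  have hlim2 : Tendsto (fun n => g (u n) - g s) atTop (𝓝 ((P {s}).toReal - (N {s}).toReal)) := by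
    refine Tendsto.congr (fun n => ?_) (hPt'.sub hNt')
    rw [← hμIco n, signedMeasure_apply μ measurableSet_Ico]
  have hu_tend' : Tendsto u atTop (𝓝[>] s) := by
    rw [tendsto_nhdsWithin_iff]
    exact ⟨hu_tend, Eventually.of_forall fun n => (hu_mem n).1⟩
  have hlim1 : Tendsto (fun n => g (u n) - g s) atTop
      (𝓝 (Function.rightLim g s - g s)) := by
    rw [hrl]
    exact (hgs.comp hu_tend').sub tendsto_const_nhds
  have hkey := tendsto_nhds_unique hlim2 hlim1
  rw [signedMeasure_apply μ (measurableSet_singleton s), hkey]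
  rfl

set_option maxHeartbeats 1000000 in
/-- When `1 + h Δ⁺g > 0` on `D_g`, the `g`-exponential equals
`exp(∫_{[a,t)} h̄ dμ_g)` and is everywhere positive. -/
theorem gExp_eq_exp_hbar (a b : ℝ) (hab : a < b) (g : ℝ → ℝ)
    (hbv : BoundedVariationOn g (Icc a b))
    (hlc : ∀ t ∈ Ioc a b, Tendsto g (nhdsWithin t (Iio t)) (nhds (g t)))
    (μ : MeasureTheory.SignedMeasure ℝ)
    (hμ : ∀ t ∈ Icc a b, μ (Ico a t) = g t - g a)
    (h : ℝ → ℝ)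
    (hh : IntegrableOn h (Ico a b) μ.totalVariation)
    (hpos : ∀ t ∈ jumpSet g a b, 0 < 1 + h t * jump g t) :
    ∀ t ∈ Icc a b,
      (∏' s : ↥(Ico a t ∩ jumpSet g a b), (1 + h s.1 * jump g s.1)) *
          Real.exp (sInt μ h (Ico a t \ jumpSet g a b)) =
        Real.exp (sInt μ (hbar g h) (Ico a t)) ∧
      0 < (∏' s : ↥(Ico a t ∩ jumpSet g a b), (1 + h s.1 * jump g s.1)) *
          Real.exp (sInt μ h (Ico a t \ jumpSet g a b)) := by
  have hjump := jump_eq_of_measure a b g hbv μ hμ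
  set P := μ.toJordanDecomposition.posPart with hP_def
  set N := μ.toJordanDecomposition.negPart with hN_def
  haveI : IsFiniteMeasure P := μ.toJordanDecomposition.posPart_finite
  haveI : IsFiniteMeasure N := μ.toJordanDecomposition.negPart_finite
  have htv_eq : μ.totalVariation = P + N := rfl
  haveI : IsFiniteMeasure μ.totalVariation := by rw [htv_eq]; infer_instance
  -- mutual singularity on singletons
  obtain ⟨A, hAm, hA1, hA2⟩ := μ.toJordanDecomposition.mutuallySingular
  have hsing : ∀ x : ℝ, P {x} = 0 ∨ N {x} = 0 := by
    intro x
    by_cases hx : x ∈ A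
    · exact Or.inl (measure_mono_null (singleton_subset_iff.2 hx) hA1)
    · exact Or.inr (measure_mono_null (singleton_subset_iff.2 hx) hA2)
  have htv_add : ∀ x : ℝ, (μ.totalVariation {x}).toReal
      = (P {x}).toReal + (N {x}).toReal := by
    intro x
    rw [htv_eq, Measure.add_apply, ENNReal.toReal_add (measure_ne_top _ _) (measure_ne_top _ _)]
  have htv : ∀ x : ℝ, (μ.totalVariation {x}).toReal = |μ {x}| := by
    intro x
    rw [signedMeasure_apply μ (measurableSet_singleton x), htv_add x]
    rcases hsing x with h0 | h0 <;>
      simp [← hP_def, ← hN_def, h0, abs_of_nonneg, abs_of_nonpos,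
        ENNReal.toReal_nonneg, neg_sub]
  -- countability of the jump set
  have hD_count : (jumpSet g a b).Countable := by
    have h1 : jumpSet g a b ⊆ {x : ℝ | 0 < μ.totalVariation {x}} := by
      intro x hx
      have hx1 := hjump x hx.1
      have h2 : μ {x} ≠ 0 := by rw [hx1]; exact hx.2
      have h3 : μ.totalVariation {x} ≠ 0 :=
        fun h0 => h2 (μ.null_of_totalVariation_zero h0)
      exact pos_iff_ne_zero.2 h3
    refine Set.Countable.mono h1 ?_
    exact Measure.countable_meas_pos_of_disjoint_iUnion₀
      (μ := μ.totalVariation) (As := fun x : ℝ => {x})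
      (fun i => (measurableSet_singleton i).nullMeasurableSet)
      (fun i j hij => Disjoint.aedisjoint (by
        simp only [Function.onFun, disjoint_singleton]
        exact hij))
  -- main part
  rintro t ⟨hat, htb⟩
  set D := jumpSet g a b with hD_def
  set S := Ico a t ∩ D with hS_def
  set C := Ico a t \ D with hC_def
  have hS_count : S.Countable := hD_count.mono inter_subset_right
  have hS_meas : MeasurableSet S := hS_count.measurableSet
  have hC_meas : MeasurableSet C := measurableSet_Ico.diff hD_count.measurableSet
  have hsub_ab : Ico a t ⊆ Ico a b := Ico_subset_Ico_right htb
  have hSab : ∀ s : S, s.1 ∈ Ico a b := fun s => hsub_ab s.2.1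
  have hSD : ∀ s : S, jump g s.1 ≠ 0 := fun s => s.2.2.2
  have hSpos : ∀ s : S, 0 < 1 + h s.1 * jump g s.1 := fun s => hpos s.1 s.2.2
  have key : ∀ s : S, (μ.totalVariation {s.1}).toReal = |jump g s.1| := fun s => by
    rw [htv s.1, hjump s.1 (hSab s)]
  -- h is integrable on S wrt totalVariation; base summability
  have hh_S : IntegrableOn h S μ.totalVariation :=
    hh.mono_set (hS_def ▸ inter_subset_left.trans hsub_ab)
  have hbase : Summable (fun s : S => |h s.1| * (μ.totalVariation {s.1}).toReal) := by
    have hfin : (∫⁻ x in S, (‖h x‖₊ : ℝ≥0∞) ∂μ.totalVariation) < ⊤ := hh_S.2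
    rw [lintegral_countable _ hS_count] at hfin
    have := ENNReal.summable_toReal hfin.ne
    refine this.congr fun s => ?_
    rw [ENNReal.toReal_mul, ENNReal.coe_toReal, coe_nnnorm, Real.norm_eq_abs]
  have hbase' : Summable (fun s : S => |h s.1| * |jump g s.1|) :=
    hbase.congr fun s => by rw [key s]
  -- summability of logs
  have hlog_abs : Summable (fun s : S => |Real.log (1 + h s.1 * jump g s.1)|) := by
    refine Summable.of_norm_bounded_eventually
      (g := fun s : S => 2 * (|h s.1| * |jump g s.1|)) (hbase'.mul_left 2) ?_
    have hc := hbase'.tendsto_cofinite_zero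
    have hev : ∀ᶠ s : S in cofinite, |h s.1| * |jump g s.1| < 1/2 :=
      hc.eventually (gt_mem_nhds (by norm_num))
    filter_upwards [hev] with s hs
    rw [Real.norm_eq_abs, abs_abs]
    have h1 : |h s.1 * jump g s.1| ≤ 1/2 := by rw [abs_mul]; exact hs.le
    have := abs_log_one_add_le h1
    rwa [abs_mul] at this
  have hlog : Summable (fun s : S => Real.log (1 + h s.1 * jump g s.1)) :=
    hlog_abs.of_abs
  -- hbar facts on S
  have hbar_eq : ∀ s : S, hbar g h s.1
      = Real.log (1 + h s.1 * jump g s.1) / jump g s.1 := fun s => if_pos (hSD s)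
  have hbar_abs : ∀ s : S, |hbar g h s.1| * (μ.totalVariation {s.1}).toReal
      = |Real.log (1 + h s.1 * jump g s.1)| := by
    intro s
    rw [key s, hbar_eq s, abs_div, div_mul_cancel₀ _ (abs_ne_zero.2 (hSD s))]
  have hsum_tv : Summable (fun s : S => |hbar g h s.1| * (μ.totalVariation {s.1}).toReal) :=
    hlog_abs.congr fun s => (hbar_abs s).symm
  have hPle : ∀ x : ℝ, (P {x}).toReal ≤ (μ.totalVariation {x}).toReal := fun x => by
    rw [htv_add x]; linarith [ENNReal.toReal_nonneg (a := N {x})]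
  have hNle : ∀ x : ℝ, (N {x}).toReal ≤ (μ.totalVariation {x}).toReal := fun x => by
    rw [htv_add x]; linarith [ENNReal.toReal_nonneg (a := P {x})]
  have hIntS_P : IntegrableOn (hbar g h) S P := by
    refine integrableOn_countable' hS_count P _ ?_
    refine Summable.of_norm_bounded hsum_tv fun s => ?_
    rw [Real.norm_eq_abs, abs_of_nonneg (by positivity)]
    exact mul_le_mul_of_nonneg_left (hPle s.1) (abs_nonneg _)
  have hIntS_N : IntegrableOn (hbar g h) S N := by
    refine integrableOn_countable' hS_count N _ ?_
    refine Summable.of_norm_bounded hsum_tv fun s => ?_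
    rw [Real.norm_eq_abs, abs_of_nonneg (by positivity)]
    exact mul_le_mul_of_nonneg_left (hNle s.1) (abs_nonneg _)
  -- integrability of h (and hbar) on C wrt P and N
  have hCsub : C ⊆ Ico a b := (diff_subset).trans hsub_ab
  have hIntC_P : IntegrableOn h C P := by
    have h1 : IntegrableOn h (Ico a b) P := by
      refine Integrable.mono_measure hh ?_
      refine Measure.restrict_mono (subset_refl _) ?_
      rw [htv_eq]; exact Measure.le_add_right le_rfl
    exact h1.mono_set hCsub
  have hIntC_N : IntegrableOn h C N := by
    have h1 : IntegrableOn h (Ico a b) N := by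
      refine Integrable.mono_measure hh ?_
      refine Measure.restrict_mono (subset_refl _) ?_
      rw [htv_eq]; exact Measure.le_add_left le_rfl
    exact h1.mono_set hCsub
  have hbarC : EqOn h (hbar g h) C := by
    intro x hx
    have hx1 : x ∈ Ico a b := hCsub hx
    have h2 : ¬ jump g x ≠ 0 := fun hne => hx.2 ⟨hx1, hne⟩
    simp [hbar, h2]
  have hIntC_P' : IntegrableOn (hbar g h) C P := hIntC_P.congr_fun hbarC hC_meas
  have hIntC_N' : IntegrableOn (hbar g h) C N := hIntC_N.congr_fun hbarC hC_meas
  -- splitting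
  have hdisj : Disjoint S C := disjoint_sdiff_self_right.mono_left inter_subset_right
  have hunion : S ∪ C = Ico a t := inter_union_diff _ _
  have hsplit_P : (∫ x in Ico a t, hbar g h x ∂P)
      = (∫ x in S, hbar g h x ∂P) + ∫ x in C, hbar g h x ∂P := by
    rw [← setIntegral_union hdisj hC_meas hIntS_P hIntC_P', hunion]
  have hsplit_N : (∫ x in Ico a t, hbar g h x ∂N)
      = (∫ x in S, hbar g h x ∂N) + ∫ x in C, hbar g h x ∂N := by
    rw [← setIntegral_union hdisj hC_meas hIntS_N hIntC_N', hunion]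
  have hCP : (∫ x in C, hbar g h x ∂P) = ∫ x in C, h x ∂P :=
    (setIntegral_congr_fun hC_meas hbarC).symm
  have hCN : (∫ x in C, hbar g h x ∂N) = ∫ x in C, h x ∂N :=
    (setIntegral_congr_fun hC_meas hbarC).symm
  -- S integrals as tsums
  have hSP : (∫ x in S, hbar g h x ∂P) = ∑' s : S, (P {s.1}).toReal • hbar g h s.1 :=
    setIntegral_countable _ hS_count hIntS_P
  have hSN : (∫ x in S, hbar g h x ∂N) = ∑' s : S, (N {s.1}).toReal • hbar g h s.1 :=
    setIntegral_countable _ hS_count hIntS_N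
  have hsumP : Summable (fun s : S => (P {s.1}).toReal • hbar g h s.1) := by
    refine Summable.of_norm_bounded hsum_tv fun s => ?_
    rw [smul_eq_mul, Real.norm_eq_abs, abs_mul, abs_of_nonneg ENNReal.toReal_nonneg, mul_comm]
    exact mul_le_mul_of_nonneg_left (hPle s.1) (abs_nonneg _)
  have hsumN : Summable (fun s : S => (N {s.1}).toReal • hbar g h s.1) := by
    refine Summable.of_norm_bounded hsum_tv fun s => ?_
    rw [smul_eq_mul, Real.norm_eq_abs, abs_mul, abs_of_nonneg ENNReal.toReal_nonneg, mul_comm]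
    exact mul_le_mul_of_nonneg_left (hNle s.1) (abs_nonneg _)
  have hdiff : (∑' s : S, (P {s.1}).toReal • hbar g h s.1)
      - (∑' s : S, (N {s.1}).toReal • hbar g h s.1)
      = ∑' s : S, Real.log (1 + h s.1 * jump g s.1) := by
    rw [← hsumP.tsum_sub hsumN]
    refine tsum_congr fun s => ?_
    rw [smul_eq_mul, smul_eq_mul, ← sub_mul,
      ← signedMeasure_apply μ (measurableSet_singleton s.1), hjump s.1 (hSab s),
      hbar_eq s, mul_comm, div_mul_cancel₀ _ (hSD s)]
  -- tprod
  have htprod : (∏' s : S, (1 + h s.1 * jump g s.1))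
      = Real.exp (∑' s : S, Real.log (1 + h s.1 * jump g s.1)) := by
    have hfun := Real.rexp_tsum_eq_tprod (f := fun s : S => 1 + h s.1 * jump g s.1)
      (fun s => hSpos s) hlog
    exact hfun.symm
  have hmain : (∏' s : S, (1 + h s.1 * jump g s.1)) * Real.exp (sInt μ h C)
      = Real.exp (sInt μ (hbar g h) (Ico a t)) := by
    rw [htprod, ← Real.exp_add]
    congr 1
    simp only [sInt]
    rw [hsplit_P, hsplit_N, hCP, hCN, hSP, hSN, ← hdiff]
    ring
  exact ⟨hmain, hmain ▸ Real.exp_pos _⟩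
end

section
/- Let $g:[a,b]\to\mathbb{R}$ be left-continuous and nondecreasing, with associated Lebesgue–Stieltjes measure $\mu_g$. Suppose $\mathcal{D}$ is a family of functions $F:[a,b]\to\mathbb{R}$ of the form $F(t) = F(a) + \int_{[a,t)} f_F\, d\mu_g$ with $|f_F(t)| \le h(t)$ for $\mu_g$-a.e. $t$, for a fixed $h\in L^1(\mu_g)$, and $\{F(a): F\in\mathcal{D}\}$ is bounded. Then $\mathcal{D}$ is $g$-equicontinuous: for each $\varepsilon>0$ and $t\in[a,b]$ there is $\delta>0$ such that $|F(s)-F(t)|<\varepsilon$ for all $F\in\mathcal{D}$ and all $s$ with $|g(s)-g(t)|<\delta$. -/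
open Set Filter MeasureTheory
open scoped ENNReal NNReal

/-- A family of primitives with a common integrable dominating function is
`g`-equicontinuous. -/
theorem primitives_g_equicontinuous (a b : ℝ) (hab : a < b) (g : ℝ → ℝ)
    (hmono : MonotoneOn g (Icc a b))
    (hlc : ∀ t ∈ Ioc a b, Tendsto g (nhdsWithin t (Iio t)) (nhds (g t)))
    (μ : Measure ℝ)
    (hμ : ∀ u ∈ Icc a b, ∀ v ∈ Icc a b, u ≤ v → μ (Ico u v) = ENNReal.ofReal (g v - g u))
    {ι : Type*} (F f : ι → ℝ → ℝ) (h : ℝ → ℝ)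
    (hint : IntegrableOn h (Ico a b) μ)
    (hfi : ∀ i, IntegrableOn (f i) (Ico a b) μ)
    (hF : ∀ i, ∀ t ∈ Icc a b, F i t = F i a + ∫ s in Ico a t, f i s ∂μ)
    (hdom : ∀ i, ∀ᵐ t ∂(μ.restrict (Ico a b)), |f i t| ≤ h t)
    (hbd : ∃ C, ∀ i, |F i a| ≤ C) :
    ∀ ε > (0 : ℝ), ∀ t ∈ Icc a b, ∃ δ > (0 : ℝ), ∀ i, ∀ s ∈ Icc a b,
      |g s - g t| < δ → |F i s - F i t| < ε := by
  intro ε hε t ht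
  set ν := μ.restrict (Ico a b) with hν
  -- absolute continuity of the integral of h
  have hfin : ∫⁻ x, ENNReal.ofReal ‖h x‖ ∂ν ≠ ⊤ := by
    have := hint.2
    rw [HasFiniteIntegral] at this
    simp only [ofReal_norm_eq_enorm]
    exact this.ne
  obtain ⟨δ', hδ'pos, hδ'⟩ :=
    exists_pos_setLIntegral_lt_of_measure_lt (μ := ν) hfin
      (ε := ENNReal.ofReal ε) (by simp [hε, hε.le])
  obtain ⟨r, hr0, hrδ'⟩ := ENNReal.lt_iff_exists_nnreal_btwn.mp hδ'pos
  have hr0' : (0:ℝ) < (r : ℝ) := by exact_mod_cast (by simpa using hr0 : (0:ℝ≥0) < r)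
  refine ⟨(r : ℝ), hr0', ?_⟩
  -- key estimate for u ≤ v
  have key : ∀ i, ∀ u ∈ Icc a b, ∀ v ∈ Icc a b, u ≤ v → g v - g u < (r : ℝ) →
      |F i v - F i u| < ε := by
    intro i u hu v hv huv hguv
    have hsub : Ico u v ⊆ Ico a b := Ico_subset_Ico hu.1 hv.2
    -- F i v - F i u = ∫ over Ico u v
    have hdiff : F i v - F i u = ∫ x in Ico u v, f i x ∂μ := by
      rw [hF i v hv, hF i u hu]
      have hU : Ico a u ∪ Ico u v = Ico a v := Ico_union_Ico_eq_Ico hu.1 huv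
      have hd : Disjoint (Ico a u) (Ico u v) := Ico_disjoint_Ico_same
      have h1 : IntegrableOn (f i) (Ico a u) μ :=
        (hfi i).mono_set (Ico_subset_Ico le_rfl hu.2)
      have h2 : IntegrableOn (f i) (Ico u v) μ := (hfi i).mono_set hsub
      have := setIntegral_union hd measurableSet_Ico h1 h2
      rw [hU] at this
      rw [this]; ring
    -- measure bound
    have hmeas : ν (Ico u v) < δ' := by
      calc ν (Ico u v) ≤ μ (Ico u v) := Measure.restrict_le_self _
        _ = ENNReal.ofReal (g v - g u) := hμ u hu v hv huv
        _ < (r : ℝ≥0∞) := by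
            rw [← ENNReal.ofReal_coe_nnreal]
            exact (ENNReal.ofReal_lt_ofReal_iff hr0').mpr hguv
        _ < δ' := hrδ'
    -- rewrite integral wrt ν
    have hres : μ.restrict (Ico u v) = ν.restrict (Ico u v) := by
      rw [hν, Measure.restrict_restrict measurableSet_Ico, inter_eq_left.mpr hsub]
    have hbound : |∫ x in Ico u v, f i x ∂μ| < ε := by
      have h1 : ‖∫ x in Ico u v, f i x ∂μ‖ ≤
          (∫⁻ x in Ico u v, ENNReal.ofReal ‖f i x‖ ∂μ).toReal :=
        norm_integral_le_lintegral_norm _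
      have hae : ∀ᵐ x ∂(μ.restrict (Ico u v)),
          ENNReal.ofReal ‖f i x‖ ≤ ENNReal.ofReal ‖h x‖ := by
        have := (hdom i).filter_mono (ae_mono (le_of_eq_of_le hres Measure.restrict_le_self))
        filter_upwards [this] with x hx
        exact ENNReal.ofReal_le_ofReal (by
          rw [Real.norm_eq_abs, Real.norm_eq_abs]
          exact hx.trans (le_abs_self _))
      have h2 : ∫⁻ x in Ico u v, ENNReal.ofReal ‖f i x‖ ∂μ ≤
          ∫⁻ x in Ico u v, ENNReal.ofReal ‖h x‖ ∂μ := lintegral_mono_ae hae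
      have h3 : ∫⁻ x in Ico u v, ENNReal.ofReal ‖h x‖ ∂μ < ENNReal.ofReal ε := by
        rw [show μ.restrict (Ico u v) = ν.restrict (Ico u v) from hres]
        exact hδ' _ hmeas
      have := (h2.trans_lt h3)
      rw [Real.norm_eq_abs] at h1
      exact h1.trans_lt (ENNReal.toReal_lt_of_lt_ofReal this)
    rwa [hdiff]
  intro i s hs hgst
  rcases le_total t s with hts | hst
  · exact key i t ht s hs hts (lt_of_le_of_lt (le_abs_self _) hgst)
  · rw [abs_sub_comm]
    rw [abs_sub_comm] at hgst
    exact key i s hs t ht hst (lt_of_le_of_lt (le_abs_self _) hgst)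
end

section
/- Let $g:[a,b]\to\mathbb{R}$ be left-continuous of bounded variation, $t\in D_g$, and suppose $f:[a,b]\to\mathbb{R}$ is $g$-differentiable at $t$ with $f(t^+)\neq f(t)$, and $h$ is defined on a set containing $f(t)$, $f(t^+)$ and the values of $f$ near $t^+$, continuous from the right at $f(t^+)$ in the appropriate sense. Then $h\circ f$ is $g$-differentiable at $t$ and $(h\circ f)'_g(t) = \frac{h(f(t^+)) - h(f(t))}{f(t^+) - f(t)}\cdot f'_g(t)$. -/
open Set Filter

/-- A function that is monotone on `Icc a b` has a right limit at any `t ∈ Ico a b`,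
namely the right limit of its monotone extension. -/
lemma aux_tendsto_of_monotoneOn {a b t : ℝ} (hab : a ≤ b) (ht : t ∈ Ico a b)
    {p : ℝ → ℝ} (hp : MonotoneOn p (Icc a b)) :
    ∃ L, Tendsto p (nhdsWithin t (Ioc t b)) (nhds L) := by
  set P : ℝ → ℝ := fun x => p (max a (min x b)) with hP
  have hmem : ∀ x, max a (min x b) ∈ Icc a b := fun x =>
    ⟨le_max_left _ _, max_le hab (min_le_right _ _)⟩
  have hPmono : Monotone P := fun x y hxy =>
    hp (hmem x) (hmem y) (max_le_max le_rfl (min_le_min hxy le_rfl))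
  refine ⟨Function.rightLim P t, ?_⟩
  have h1 : Tendsto P (nhdsWithin t (Ioc t b)) (nhds (Function.rightLim P t)) :=
    (hPmono.tendsto_rightLim t).mono_left
      (le_of_eq (nhdsWithin_Ioc_eq_nhdsGT ht.2))
  refine h1.congr' ?_
  filter_upwards [self_mem_nhdsWithin] with x hx
  have : max a (min x b) = x := by
    rw [min_eq_left hx.2, max_eq_right (le_trans ht.1 hx.1.le)]
  simp [P, this]

/-- Chain rule at a jump point when `f(t⁺) ≠ f(t)`:
`(h ∘ f)'_g(t) = (h(f(t⁺)) - h(f(t)))/(f(t⁺) - f(t)) · f'_g(t)`. -/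
theorem chain_rule_at_jump (a b : ℝ) (hab : a < b) (g : ℝ → ℝ)
    (hbv : BoundedVariationOn g (Icc a b))
    (hlc : ∀ t ∈ Ioc a b, Tendsto g (nhdsWithin t (Iio t)) (nhds (g t)))
    (f h : ℝ → ℝ) (t : ℝ) (ht : t ∈ Ico a b)
    (htD : Function.rightLim g t ≠ g t)
    (ftp : ℝ) (hf : Tendsto f (nhdsWithin t (Ioc t b)) (nhds ftp))
    (hne : ftp ≠ f t)
    (hh : Tendsto (fun s => h (f s)) (nhdsWithin t (Ioc t b)) (nhds (h ftp))) :
    Tendsto (fun s => (h (f s) - h (f t)) / (g s - g t)) (nhdsWithin t (Ioc t b))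
      (nhds ((h ftp - h (f t)) / (ftp - f t) *
        ((ftp - f t) / (Function.rightLim g t - g t)))) := by
  -- g has a right limit at t, since it is BV
  obtain ⟨p, q, hpmono, hqmono, hpq⟩ :=
    hbv.locallyBoundedVariationOn.exists_monotoneOn_sub_monotoneOn
  obtain ⟨Lp, hLp⟩ := aux_tendsto_of_monotoneOn hab.le ht hpmono
  obtain ⟨Lq, hLq⟩ := aux_tendsto_of_monotoneOn hab.le ht hqmono
  have hg : Tendsto g (nhdsWithin t (Ioc t b)) (nhds (Lp - Lq)) := by
    rw [hpq]; exact hLp.sub hLq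
  have hne_bot : (nhdsWithin t (Ioc t b)).NeBot := by
    rw [nhdsWithin_Ioc_eq_nhdsGT ht.2]; infer_instance
  have hrl : Function.rightLim g t = Lp - Lq := by
    apply rightLim_eq_of_tendsto
    · rw [← nhdsWithin_Ioc_eq_nhdsGT ht.2]; exact hg
  rw [hrl] at htD ⊢
  have hC : Lp - Lq - g t ≠ 0 := sub_ne_zero.mpr htD
  have key : Tendsto (fun s => (h (f s) - h (f t)) / (g s - g t))
      (nhdsWithin t (Ioc t b)) (nhds ((h ftp - h (f t)) / (Lp - Lq - g t))) :=
    (hh.sub_const _).div (hg.sub_const _) hC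
  convert key using 2
  field_simp [sub_ne_zero.mpr hne]
end

section
/- Let $g:[a,b]\to\mathbb{R}$ be left-continuous of bounded variation, $t\in D_g$, $f$ $g$-differentiable at $t$, and $h\in C^1$ on the closed interval with endpoints $f(t)$ and $f(t^+)$. Then $(h\circ f)'_g(t) = f'_g(t)\int_0^1 h'\big(f(t) + r\, f'_g(t)\, \Delta^+g(t)\big)\, dr$. -/
open Set Filter

lemma key_ftc (u v : ℝ) (h h' : ℝ → ℝ)
    (hC1 : ∀ y ∈ uIcc u v, HasDerivWithinAt h (h' y) (uIcc u v) y)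
    (hC1' : ContinuousOn h' (uIcc u v)) :
    h v - h u = (v - u) * ∫ r in (0:ℝ)..1, h' (u + r * (v - u)) := by
  set ℓ : ℝ → ℝ := fun r => u + r * (v - u) with hℓdef
  have hmap : MapsTo ℓ (Icc 0 1) (uIcc u v) := by
    intro r hr
    simp only [hℓdef]
    rcases le_total u v with huv | huv
    · rw [mem_uIcc]
      left
      constructor <;> nlinarith [hr.1, hr.2]
    · rw [mem_uIcc]
      right
      constructor <;> nlinarith [hr.1, hr.2]
  have hℓderiv : ∀ x : ℝ, HasDerivAt ℓ (v - u) x := by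
    intro x
    have := ((hasDerivAt_id x).mul_const (v - u)).const_add u
    simp only [id, one_mul] at this
    exact this
  have hderiv : ∀ x ∈ Icc (0:ℝ) 1, HasDerivWithinAt (h ∘ ℓ) ((v - u) * h' (ℓ x)) (Icc 0 1) x := by
    intro x hx
    have := (hC1 (ℓ x) (hmap hx)).comp x ((hℓderiv x).hasDerivWithinAt) hmap
    simpa [mul_comm] using this
  have hcont : ContinuousOn (h ∘ ℓ) (Icc 0 1) := fun x hx =>
    (hderiv x hx).continuousWithinAt
  have hℓcont : Continuous ℓ := by
    apply Continuous.add continuous_const (continuous_id.mul continuous_const)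
  have hintcont : ContinuousOn (fun x => (v - u) * h' (ℓ x)) (uIcc (0:ℝ) 1) := by
    rw [uIcc_of_le zero_le_one]
    exact continuousOn_const.mul (hC1'.comp hℓcont.continuousOn hmap)
  have hint : IntervalIntegrable (fun x => (v - u) * h' (ℓ x)) MeasureTheory.volume 0 1 :=
    hintcont.intervalIntegrable
  have hftc := intervalIntegral.integral_eq_sub_of_hasDeriv_right_of_le zero_le_one hcont
    (fun x hx => ((hderiv x (Ioo_subset_Icc_self hx)).hasDerivAt
      (Icc_mem_nhds hx.1 hx.2)).hasDerivWithinAt) hint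
  have h1 : ℓ 1 = v := by simp [hℓdef]
  have h0 : ℓ 0 = u := by simp [hℓdef]
  rw [intervalIntegral.integral_const_mul] at hftc
  simp only [hℓdef, Function.comp] at hftc h1 h0
  rw [hftc, h1, h0]

/-- Explicit chain rule at a jump point for `h ∈ C¹` on the interval with
endpoints `f(t)` and `f(t⁺)`:
`(h ∘ f)'_g(t) = f'_g(t) ∫₀¹ h'(f(t) + r f'_g(t) Δ⁺g(t)) dr`. -/
theorem chain_rule_integral_form (a b : ℝ) (hab : a < b) (g : ℝ → ℝ)
    (hbv : BoundedVariationOn g (Icc a b))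
    (hlc : ∀ t ∈ Ioc a b, Tendsto g (nhdsWithin t (Iio t)) (nhds (g t)))
    (f h h' : ℝ → ℝ) (t : ℝ) (ht : t ∈ Ico a b)
    (htD : Function.rightLim g t ≠ g t)
    (ftp : ℝ) (hf : Tendsto f (nhdsWithin t (Ioc t b)) (nhds ftp))
    (hmap : ∀ s ∈ Ioc t b, f s ∈ uIcc (f t) ftp)
    (hC1 : ∀ y ∈ uIcc (f t) ftp, HasDerivWithinAt h (h' y) (uIcc (f t) ftp) y)
    (hC1' : ContinuousOn h' (uIcc (f t) ftp)) :
    Tendsto (fun s => (h (f s) - h (f t)) / (g s - g t)) (nhdsWithin t (Ioc t b))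
      (nhds (((ftp - f t) / (Function.rightLim g t - g t)) *
        ∫ r in (0:ℝ)..1, h' (f t + r * (((ftp - f t) / (Function.rightLim g t - g t)) *
          (Function.rightLim g t - g t))))) := by
  obtain ⟨p, q, hp, hq, hpq⟩ := hbv.locallyBoundedVariationOn.exists_monotoneOn_sub_monotoneOn
  have htIcc : t ∈ Icc a b := ⟨ht.1, ht.2.le⟩
  have hsub : Ioo t b ⊆ Icc a b := fun x hx => ⟨ht.1.trans hx.1.le, hx.2.le⟩
  have hne : (Ioo t b).Nonempty := nonempty_Ioo.2 ht.2
  have hbp : BddBelow (p '' Ioo t b) := by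
    refine ⟨p t, ?_⟩
    rintro y ⟨s, hs, rfl⟩
    exact hp htIcc (hsub hs) hs.1.le
  have hbq : BddBelow (q '' Ioo t b) := by
    refine ⟨q t, ?_⟩
    rintro y ⟨s, hs, rfl⟩
    exact hq htIcc (hsub hs) hs.1.le
  have hpt : Tendsto p (nhdsWithin t (Ioi t)) (nhds (sInf (p '' Ioo t b))) :=
    MonotoneOn.tendsto_nhdsWithin_Ioo_right hne (hp.mono hsub) hbp
  have hqt : Tendsto q (nhdsWithin t (Ioi t)) (nhds (sInf (q '' Ioo t b))) :=
    MonotoneOn.tendsto_nhdsWithin_Ioo_right hne (hq.mono hsub) hbq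
  have hgt : Tendsto g (nhdsWithin t (Ioi t)) (nhds (sInf (p '' Ioo t b) - sInf (q '' Ioo t b))) := by
    rw [hpq]; exact hpt.sub hqt
  have hR : Function.rightLim g t = sInf (p '' Ioo t b) - sInf (q '' Ioo t b) :=
    rightLim_eq_of_tendsto hgt
  have hgR : Tendsto g (nhdsWithin t (Ioi t)) (nhds (Function.rightLim g t)) := by
    rw [hR]; exact hgt
  set L := Function.rightLim g t with hL
  have hΔne : L - g t ≠ 0 := sub_ne_zero.2 htD
  -- denominator
  have hden : Tendsto (fun s => g s - g t) (nhdsWithin t (Ioc t b)) (nhds (L - g t)) :=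
    ((hgR.mono_left (nhdsWithin_mono t Ioc_subset_Ioi_self))).sub_const (g t)
  -- numerator
  have hconth : ContinuousOn h (uIcc (f t) ftp) := fun y hy => (hC1 y hy).continuousWithinAt
  have htf : Tendsto f (nhdsWithin t (Ioc t b)) (nhdsWithin ftp (uIcc (f t) ftp)) := by
    rw [tendsto_nhdsWithin_iff]
    exact ⟨hf, eventually_mem_nhdsWithin.mono fun s hs => hmap s hs⟩
  have hnum : Tendsto (fun s => h (f s) - h (f t)) (nhdsWithin t (Ioc t b))
      (nhds (h ftp - h (f t))) :=
    (((hconth ftp right_mem_uIcc).tendsto.comp htf)).sub_const (h (f t))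
  have main : Tendsto (fun s => (h (f s) - h (f t)) / (g s - g t)) (nhdsWithin t (Ioc t b))
      (nhds ((h ftp - h (f t)) / (L - g t))) := hnum.div hden hΔne
  have hcancel : ((ftp - f t) / (L - g t)) * (L - g t) = ftp - f t :=
    div_mul_cancel₀ _ hΔne
  have hkey := key_ftc (f t) ftp h h' hC1 hC1'
  convert main using 2
  rw [hcancel]
  rw [hkey]
  field_simp
end

section
/- Let $g:[a,b]\to\mathbb{R}$ be left-continuous of bounded variation with signed measure $\mu_g$ and total variation measure $|\mu_g|$. Let $f:[a,b]\to\mathbb{R}$ be bounded and $|\mu_g|$-measurable, $t\in[a,b)$ a point where $\widetilde{g}$ is continuous, and suppose there exist $c>0$ and $\delta_0>0$ with $|\widetilde{g}(s)-\widetilde{g}(t)| \le c\,|g(s)-g(t)|$ for all $s$ with $|s-t|<\delta_0$. If $f$ is $\widetilde{g}$-continuous at $t$, then $F(s) = \int_{[a,s)} f\,d\mu_g$ satisfies: for every $\varepsilon>0$ there is $\delta>0$ such that $|F(s)-F(t) - f(t)(g(s)-g(t))| \le \varepsilon\,|g(s)-g(t)|$ for all $s$ with $|s-t|<\delta$. 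-/
open Set Filter MeasureTheory

/-- A signed measure applied to a measurable set equals the difference of the Jordan parts. -/
lemma signed_apply_eq (μ : MeasureTheory.SignedMeasure ℝ) {A : Set ℝ} (hA : MeasurableSet A) :
    μ A = (μ.toJordanDecomposition.posPart A).toReal -
      (μ.toJordanDecomposition.negPart A).toReal := by
  conv_lhs => rw [← μ.toSignedMeasure_toJordanDecomposition]
  rw [MeasureTheory.JordanDecomposition.toSignedMeasure, MeasureTheory.VectorMeasure.sub_apply,
    MeasureTheory.Measure.toSignedMeasure_apply_measurable hA,
    MeasureTheory.Measure.toSignedMeasure_apply_measurable hA]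
  rfl

/-- Key estimate: if `|f - c0| ≤ ξ` on a measurable set `A`, then the signed integral of `f`
over `A` differs from `c0 * μ A` by at most `ξ` times the total variation of `A`. -/
lemma sInt_est (μ : MeasureTheory.SignedMeasure ℝ) (f : ℝ → ℝ) (hf : Measurable f)
    (C : ℝ) (hC : ∀ s, |f s| ≤ C) {A : Set ℝ} (hA : MeasurableSet A)
    (c0 ξ : ℝ) (hξ : 0 ≤ ξ) (hbd : ∀ τ ∈ A, |f τ - c0| ≤ ξ) :
    |sInt μ f A - c0 * μ A| ≤ ξ * (μ.totalVariation A).toReal := by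
  set P := μ.toJordanDecomposition.posPart with hP
  set N := μ.toJordanDecomposition.negPart with hN
  have hPfin : P A < ⊤ := measure_lt_top _ _
  have hNfin : N A < ⊤ := measure_lt_top _ _
  have hintf : ∀ (ν : Measure ℝ) [IsFiniteMeasure ν], Integrable f (ν.restrict A) := by
    intro ν _
    refine ⟨hf.aestronglyMeasurable, HasFiniteIntegral.of_bounded (C := C) ?_⟩
    exact ae_of_all _ fun x => by rw [Real.norm_eq_abs]; exact hC x
  have hsub : ∀ (ν : Measure ℝ) [IsFiniteMeasure ν],
      ∫ x in A, (f x - c0) ∂ν = (∫ x in A, f x ∂ν) - c0 * (ν A).toReal := by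
    intro ν _
    rw [integral_sub (hintf ν) (integrable_const _), setIntegral_const]
    ring_nf
    simp [mul_comm, Measure.real]
  have hboundP : |∫ x in A, (f x - c0) ∂P| ≤ ξ * (P A).toReal := by
    have := norm_setIntegral_le_of_norm_le_const (μ := P) (s := A) (C := ξ) hPfin
      (fun x hx => by rw [Real.norm_eq_abs]; exact hbd x hx)
    simpa [Real.norm_eq_abs, Measure.real] using this
  have hboundN : |∫ x in A, (f x - c0) ∂N| ≤ ξ * (N A).toReal := by
    have := norm_setIntegral_le_of_norm_le_const (μ := N) (s := A) (C := ξ) hNfin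
      (fun x hx => by rw [Real.norm_eq_abs]; exact hbd x hx)
    simpa [Real.norm_eq_abs, Measure.real] using this
  have hμA : μ A = (P A).toReal - (N A).toReal := signed_apply_eq μ hA
  have htv : (μ.totalVariation A).toReal = (P A).toReal + (N A).toReal := by
    rw [MeasureTheory.SignedMeasure.totalVariation, MeasureTheory.Measure.add_apply,
      ENNReal.toReal_add hPfin.ne hNfin.ne]
  have hrw : sInt μ f A - c0 * μ A =
      (∫ x in A, (f x - c0) ∂P) - ∫ x in A, (f x - c0) ∂N := by
    rw [hsub P, hsub N, hμA]; unfold sInt; ring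
  rw [hrw, htv]
  calc |(∫ x in A, (f x - c0) ∂P) - ∫ x in A, (f x - c0) ∂N|
      ≤ |∫ x in A, (f x - c0) ∂P| + |∫ x in A, (f x - c0) ∂N| := abs_sub _ _
    _ ≤ ξ * (P A).toReal + ξ * (N A).toReal := add_le_add hboundP hboundN
    _ = ξ * ((P A).toReal + (N A).toReal) := by ring

/-- Pointwise differentiation-type estimate for the primitive of a bounded
measurable `g̃`-continuous function at a point where `g̃` is continuous and
comparable to `g`. -/
theorem primitive_pointwise_estimate (a b : ℝ) (hab : a < b) (g : ℝ → ℝ)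
    (hbv : BoundedVariationOn g (Icc a b))
    (hlc : ∀ t ∈ Ioc a b, Tendsto g (nhdsWithin t (Iio t)) (nhds (g t)))
    (μ : MeasureTheory.SignedMeasure ℝ)
    (hμ : ∀ t ∈ Icc a b, μ (Ico a t) = g t - g a)
    (hν : ∀ u ∈ Icc a b, ∀ v ∈ Icc a b, u ≤ v →
      μ.totalVariation (Ico u v) =
        ENNReal.ofReal (variationOnFromTo g (Icc a b) a v - variationOnFromTo g (Icc a b) a u))
    (f : ℝ → ℝ) (hmeas : Measurable f) (C : ℝ) (hbdd : ∀ s, |f s| ≤ C)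
    (t : ℝ) (ht : t ∈ Ico a b)
    (hgt : ContinuousAt (fun s => variationOnFromTo g (Icc a b) a s) t)
    (c δ0 : ℝ) (hc : 0 < c) (hδ0 : 0 < δ0)
    (hcomp : ∀ s ∈ Icc a b, |s - t| < δ0 →
      |variationOnFromTo g (Icc a b) a s - variationOnFromTo g (Icc a b) a t| ≤ c * |g s - g t|)
    (hft : ∀ ε > (0 : ℝ), ∃ δ > (0 : ℝ), ∀ s ∈ Icc a b,
      |variationOnFromTo g (Icc a b) a s - variationOnFromTo g (Icc a b) a t| < δ →
        |f s - f t| < ε) :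
    ∀ ε > (0 : ℝ), ∃ δ > (0 : ℝ), ∀ s ∈ Icc a b, |s - t| < δ →
      |sInt μ f (Ico a s) - sInt μ f (Ico a t) - f t * (g s - g t)| ≤ ε * |g s - g t| := by
  intro ε hε
  set V : ℝ → ℝ := fun s => variationOnFromTo g (Icc a b) a s with hVdef
  have hlbv : LocallyBoundedVariationOn g (Icc a b) := hbv.locallyBoundedVariationOn
  have haI : a ∈ Icc a b := left_mem_Icc.2 hab.le
  have hmono : MonotoneOn V (Icc a b) := variationOnFromTo.monotoneOn hlbv haI
  set ξ := ε / c with hξdef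
  have hξpos : 0 < ξ := div_pos hε hc
  obtain ⟨δ1, hδ1, hδ1f⟩ := hft ξ hξpos
  rw [Metric.continuousAt_iff] at hgt
  obtain ⟨δ2, hδ2, hδ2V⟩ := hgt δ1 hδ1
  refine ⟨min δ2 δ0, lt_min hδ2 hδ0, ?_⟩
  intro s hs hsδ
  have htI : t ∈ Icc a b := ⟨ht.1, ht.2.le⟩
  have hVs : |V s - V t| < δ1 := by
    have := hδ2V (show dist s t < δ2 from lt_of_lt_of_le hsδ (min_le_left _ _))
    simpa [Real.dist_eq] using this
  have hVcomp : |V s - V t| ≤ c * |g s - g t| :=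
    hcomp s hs (lt_of_lt_of_le hsδ (min_le_right _ _))
  have hintf : ∀ (ν : Measure ℝ) [IsFiniteMeasure ν] (A : Set ℝ),
      Integrable f (ν.restrict A) := by
    intro ν _ A
    refine ⟨hmeas.aestronglyMeasurable, HasFiniteIntegral.of_bounded (C := C) ?_⟩
    exact ae_of_all _ fun x => by rw [Real.norm_eq_abs]; exact hbdd x
  -- main estimate for an ordered pair u ≤ v in Icc a b
  have main : ∀ u v : ℝ, u ∈ Icc a b → v ∈ Icc a b → u ≤ v →
      (∀ τ ∈ Ico u v, |f τ - f t| ≤ ξ) → (V v - V u ≤ c * |g s - g t|) →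
      |sInt μ f (Ico a v) - sInt μ f (Ico a u) - f t * (g v - g u)| ≤ ε * |g s - g t| := by
    intro u v huI hvI huv hfbd hVbd
    have hunion : Ico a u ∪ Ico u v = Ico a v := Ico_union_Ico_eq_Ico huI.1 huv
    have hdisj : Disjoint (Ico a u) (Ico u v) := Ico_disjoint_Ico_same
    have hFdiff : sInt μ f (Ico a v) - sInt μ f (Ico a u) = sInt μ f (Ico u v) := by
      unfold sInt
      rw [← hunion,
        setIntegral_union hdisj measurableSet_Ico (hintf _ _) (hintf _ _),
        setIntegral_union hdisj measurableSet_Ico (hintf _ _) (hintf _ _)]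
      ring
    have hμuv : μ (Ico u v) = g v - g u := by
      have hadd : μ (Ico a v) = μ (Ico a u) + μ (Ico u v) := by
        rw [← hunion]
        exact μ.of_union hdisj measurableSet_Ico measurableSet_Ico
      have h1 := hμ u huI
      have h2 := hμ v hvI
      rw [h1, h2] at hadd
      linarith
    have hVnn : 0 ≤ V v - V u := sub_nonneg.2 (hmono huI hvI huv)
    have hTV : (μ.totalVariation (Ico u v)).toReal = V v - V u := by
      rw [hν u huI v hvI huv, ENNReal.toReal_ofReal hVnn]
    have hkey := sInt_est μ f hmeas C hbdd (measurableSet_Ico (a := u) (b := v))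
      (f t) ξ hξpos.le hfbd
    rw [hμuv, hTV] at hkey
    rw [hFdiff]
    calc |sInt μ f (Ico u v) - f t * (g v - g u)| ≤ ξ * (V v - V u) := hkey
      _ ≤ ξ * (c * |g s - g t|) := by
          exact mul_le_mul_of_nonneg_left hVbd hξpos.le
      _ = ε * |g s - g t| := by
          rw [hξdef]; field_simp
  rcases le_total t s with hts | hst
  · -- case t ≤ s
    have hfbd : ∀ τ ∈ Ico t s, |f τ - f t| ≤ ξ := by
      intro τ hτ
      have hτI : τ ∈ Icc a b := ⟨ht.1.trans hτ.1, hτ.2.le.trans hs.2⟩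
      have h1 : V t ≤ V τ := hmono htI hτI hτ.1
      have h2 : V τ ≤ V s := hmono hτI hs hτ.2.le
      have : |V τ - V t| < δ1 := by
        rw [abs_of_nonneg (by linarith)]
        calc V τ - V t ≤ V s - V t := by linarith
          _ ≤ |V s - V t| := le_abs_self _
          _ < δ1 := hVs
      exact (hδ1f τ hτI this).le
    have hVbd : V s - V t ≤ c * |g s - g t| :=
      le_trans (le_abs_self _) hVcomp
    exact main t s htI hs hts hfbd hVbd
  · -- case s ≤ t
    have hfbd : ∀ τ ∈ Ico s t, |f τ - f t| ≤ ξ := by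
      intro τ hτ
      have hτI : τ ∈ Icc a b := ⟨hs.1.trans hτ.1, hτ.2.le.trans htI.2⟩
      have h1 : V s ≤ V τ := hmono hs hτI hτ.1
      have h2 : V τ ≤ V t := hmono hτI htI hτ.2.le
      have : |V τ - V t| < δ1 := by
        rw [abs_of_nonpos (by linarith), neg_sub]
        calc V t - V τ ≤ V t - V s := by linarith
          _ ≤ |V s - V t| := by rw [abs_sub_comm]; exact le_abs_self _
          _ < δ1 := hVs
      exact (hδ1f τ hτI this).le
    have hVbd : V t - V s ≤ c * |g s - g t| := by
      calc V t - V s ≤ |V s - V t| := by rw [abs_sub_comm]; exact le_abs_self _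
        _ ≤ c * |g s - g t| := hVcomp
    have := main s t hs htI hst hfbd hVbd
    calc |sInt μ f (Ico a s) - sInt μ f (Ico a t) - f t * (g s - g t)|
        = |sInt μ f (Ico a t) - sInt μ f (Ico a s) - f t * (g t - g s)| := by
          rw [← abs_neg]; ring_nf
      _ ≤ ε * |g s - g t| := this
end
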